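/- Define polynomials Q_k ∈ ℚ[X] for k ≥ 1 by Q_1 = −(3X² + 2)/8 and Q_{k+1} = (3/2)(k+1)·X·Q_k − (1/2)(X² − 1)·Q_k′ − (1/2)·∑_{j=1}^{k−1} Q_j·Q_{k−j}, where Q′ denotes the formal derivative. Then for every k ≥ 1, Q_k has degree exactly k+1 and satisfies the parity relation Q_k(−X) = (−1)^{k+1}·Q_k(X); in particular Q_{2k−1} is an even polynomial and Q_{2k} is an odd polynomial. -/
import Mathlib


open Polynomial

/-- The polynomials `Q_k ∈ ℚ[X]`: `Q_1 = −(3X²+2)/8` and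
`Q_{k+1} = (3/2)(k+1)·X·Q_k − (1/2)(X²−1)·Q_k′ − (1/2)∑_{j=1}^{k−1} Q_j·Q_{k−j}`. -/
noncomputable def QHer : ℕ → Polynomial ℚ
  | 0 => 0
  | 1 => C (-(1 : ℚ) / 8) * (3 * X ^ 2 + 2)
  | (k + 2) =>
      C (((3 : ℚ) / 2) * ((k : ℚ) + 2)) * X * QHer (k + 1)
        - C ((1 : ℚ) / 2) * (X ^ 2 - 1) * derivative (QHer (k + 1))
        - C ((1 : ℚ) / 2) *
            ∑ j ∈ (Finset.Ico 1 (k + 1)).attach, QHer j.1 * QHer (k + 1 - j.1)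
  decreasing_by
    all_goals try (have hj := Finset.mem_Ico.mp j.2)
    all_goals omega

/-- For every `k ≥ 1`, `Q_k` has degree exactly `k+1` and satisfies the parity relation
`Q_k(−X) = (−1)^{k+1} Q_k(X)`; in particular `Q_{2k−1}` is even and `Q_{2k}` is odd. -/
lemma QHer_key : ∀ k : ℕ, 1 ≤ k →
    (QHer k).coeff (k + 1) < 0 ∧ (QHer k).natDegree ≤ k + 1 ∧
    (QHer k).comp (-X) = (-1) ^ (k + 1) * QHer k := by
  intro k
  induction k using Nat.strong_induction_on with
  | _ k ih =>
  intro hk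
  obtain _ | _ | m := k
  · omega
  · refine ⟨by simp [QHer]; norm_num, ?_, by simp [QHer]⟩
    rw [QHer]; compute_degree
  · -- inductive step, k = m + 2
    have hQ : QHer (m + 2) =
        C (((3 : ℚ) / 2) * ((m : ℚ) + 2)) * X * QHer (m + 1)
          - C ((1 : ℚ) / 2) * (X ^ 2 - 1) * derivative (QHer (m + 1))
          - C ((1 : ℚ) / 2) *
              ∑ j ∈ (Finset.Ico 1 (m + 1)).attach, QHer j.1 * QHer (m + 1 - j.1) := by
      rw [QHer]
    obtain ⟨ha, hdle, hpar⟩ := ih (m + 1) (by omega) (by omega)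
    -- exact natDegrees for smaller indices
    have hnd : ∀ j, 1 ≤ j → j ≤ m + 1 → (QHer j).natDegree = j + 1 := by
      intro j h1 h2
      obtain ⟨hc, hd, -⟩ := ih j (by omega) h1
      exact le_antisymm hd (le_natDegree_of_ne_zero hc.ne)
    have hnd1 : (QHer (m + 1)).natDegree = m + 2 := hnd (m + 1) (by omega) (by omega)
    refine ⟨?_, ?_, ?_⟩
    · -- coefficient at m+3 is negative
      have hA : (C (((3 : ℚ) / 2) * ((m : ℚ) + 2)) * X * QHer (m + 1)).coeff (m + 2 + 1)
          = ((3 : ℚ) / 2) * ((m : ℚ) + 2) * (QHer (m + 1)).coeff (m + 2) := by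
        rw [mul_assoc, coeff_C_mul, coeff_X_mul]
      have hB : (C ((1 : ℚ) / 2) * (X ^ 2 - 1) * derivative (QHer (m + 1))).coeff (m + 2 + 1)
          = (1 : ℚ) / 2 * ((QHer (m + 1)).coeff (m + 2) * ((m : ℚ) + 2)) := by
        rw [mul_assoc, coeff_C_mul, sub_mul, one_mul, coeff_sub,
          show m + 2 + 1 = m + 1 + 2 from rfl, coeff_X_pow_mul, coeff_derivative]
        have hzero : (derivative (QHer (m + 1))).coeff (m + 1 + 2) = 0 := by
          apply coeff_eq_zero_of_natDegree_lt
          refine (natDegree_derivative_le _).trans_lt ?_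
          omega
        rw [hzero]
        push_cast
        ring
      have hS : ∀ j ∈ (Finset.Ico 1 (m + 1)).attach,
          (QHer j.1 * QHer (m + 1 - j.1)).coeff (m + 2 + 1)
          = (QHer j.1).coeff (j.1 + 1) * (QHer (m + 1 - j.1)).coeff (m + 1 - j.1 + 1) := by
        intro j _
        have hj := Finset.mem_Ico.mp j.2
        have e1 := hnd j.1 hj.1 (by omega)
        have e2 := hnd (m + 1 - j.1) (by omega) (by omega)
        have := coeff_mul_degree_add_degree (QHer j.1) (QHer (m + 1 - j.1))
        rw [e1, e2, show j.1 + 1 + (m + 1 - j.1 + 1) = m + 2 + 1 by omega] at this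
        rw [this, leadingCoeff, leadingCoeff, e1, e2]
      have hSpos : (0:ℚ) ≤ ∑ j ∈ (Finset.Ico 1 (m + 1)).attach,
          (QHer j.1 * QHer (m + 1 - j.1)).coeff (m + 2 + 1) := by
        apply Finset.sum_nonneg
        intro j hjmem
        rw [hS j hjmem]
        have hj := Finset.mem_Ico.mp j.2
        have c1 := (ih j.1 (by omega) hj.1).1
        have c2 := (ih (m + 1 - j.1) (by omega) (by omega)).1
        nlinarith
      rw [hQ, coeff_sub, coeff_sub, hA, hB, coeff_C_mul, finset_sum_coeff]
      have hm : (0:ℚ) ≤ (m:ℚ) := Nat.cast_nonneg m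
      nlinarith [ha, hSpos]
    · -- degree bound
      rw [hQ]
      refine (natDegree_sub_le _ _).trans (max_le ((natDegree_sub_le _ _).trans (max_le ?_ ?_)) ?_)
      · refine natDegree_mul_le.trans ?_
        have h1 : (C (((3 : ℚ) / 2) * ((m : ℚ) + 2)) * X).natDegree ≤ 1 :=
          (natDegree_C_mul_le _ _).trans natDegree_X_le
        omega
      · refine natDegree_mul_le.trans ?_
        have h1 : (C ((1 : ℚ) / 2) * (X ^ 2 - 1)).natDegree ≤ 2 := by
          refine natDegree_mul_le.trans ?_
          have := natDegree_sub_le (X ^ 2 : ℚ[X]) 1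
          simp at this ⊢
          omega
        have h2 : (derivative (QHer (m + 1))).natDegree ≤ m + 1 :=
          (natDegree_derivative_le _).trans (by omega)
        omega
      · refine natDegree_mul_le.trans ?_
        have h2 : (∑ j ∈ (Finset.Ico 1 (m + 1)).attach,
            QHer j.1 * QHer (m + 1 - j.1)).natDegree ≤ m + 2 + 1 := by
          refine natDegree_sum_le_of_forall_le _ _ ?_
          intro j _
          have hj := Finset.mem_Ico.mp j.2
          refine natDegree_mul_le.trans ?_
          rw [hnd j.1 hj.1 (by omega), hnd (m + 1 - j.1) (by omega) (by omega)]
          omega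
        simp
        omega
    · -- parity
      have hder : (derivative (QHer (m + 1))).comp (-X)
          = (-1) ^ (m + 2 + 1) * derivative (QHer (m + 1)) := by
        have h := derivative_comp (QHer (m + 1)) (-X)
        rw [hpar] at h
        simp only [derivative_mul, derivative_pow, derivative_neg, derivative_one,
          derivative_X, neg_zero, zero_mul, mul_zero, zero_add, mul_one, neg_mul, one_mul] at h
        rw [pow_succ]
        linear_combination h
      have hsum : ∀ j ∈ (Finset.Ico 1 (m + 1)).attach,
          (QHer j.1).comp (-X) * (QHer (m + 1 - j.1)).comp (-X)
          = (-1) ^ (m + 2 + 1) * (QHer j.1 * QHer (m + 1 - j.1)) := by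
        intro j _
        have hj := Finset.mem_Ico.mp j.2
        obtain ⟨-, -, hp1⟩ := ih j.1 (by omega) hj.1
        obtain ⟨-, -, hp2⟩ := ih (m + 1 - j.1) (by omega) (by omega)
        rw [hp1, hp2, show m + 2 + 1 = j.1 + 1 + (m + 1 - j.1 + 1) by omega, pow_add]
        ring
      rw [hQ]
      simp only [sub_comp, mul_comp, sum_comp, C_comp, X_comp, pow_comp, one_comp]
      rw [hder, hpar, Finset.sum_congr rfl hsum, ← Finset.mul_sum]
      simp only [pow_succ]
      ring

theorem stmt10 : ∀ k : ℕ, 1 ≤ k →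
    (QHer k).degree = (k + 1 : ℕ) ∧
    (QHer k).comp (-X) = (-1) ^ (k + 1) * QHer k := by
  intro k hk
  obtain ⟨hc, hd, hp⟩ := QHer_key k hk
  have hne : (QHer k).natDegree = k + 1 := le_antisymm hd (le_natDegree_of_ne_zero hc.ne)
  have h0 : QHer k ≠ 0 := fun h => by simp [h] at hc
  exact ⟨by rw [degree_eq_natDegree h0, hne], hp⟩
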